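/- Let J = diag(1,-1,1), A the 3×3 tridiagonal matrix with diagonal (a,-a,a) (a real), superdiagonal (b₁,b₂), subdiagonal (c₁,c₂). For θ ∈ ℝ define H_θ(A) = ((A + JA*J)/2) cos θ + ((A - JA*J)/(2i)) sin θ. Then det(H_θ(A) - zI₃) = -(z - a cos θ)(z² - p - q cos 2θ - t sin 2θ), where p = (Tr(JA*JA) - a²)/4, q = Re(a² + b₁c₁ + b₂c₂)/2, t = Im(b₁c₁ + b₂c₂)/2. -/

import Mathlib

open Matrix Complex Real

set_option maxHeartbeats 1000000 in
theorem stmt2 (a : ℝ) (b₁ b₂ c₁ c₂ : ℂ)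
    (A : Matrix (Fin 3) (Fin 3) ℂ)
    (hA : A = !![(a : ℂ), b₁, 0; c₁, -(a : ℂ), b₂; 0, c₂, (a : ℂ)])
    (J : Matrix (Fin 3) (Fin 3) ℂ)
    (hJ : J = !![1, 0, 0; 0, -1, 0; 0, 0, 1])
    (θ : ℝ)
    (H : Matrix (Fin 3) (Fin 3) ℂ)
    (hH : H = (Real.cos θ : ℂ) • (((1:ℂ)/2) • (A + J * Aᴴ * J))
            + (Real.sin θ : ℂ) • ((1 / (2 * Complex.I)) • (A - J * Aᴴ * J)))
    (p q t : ℂ)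
    (hp : p = (Matrix.trace (J * Aᴴ * J * A) - (a : ℂ)^2) / 4)
    (hq : q = ((((a : ℂ)^2 + b₁ * c₁ + b₂ * c₂).re : ℂ)) / 2)
    (ht : t = (((b₁ * c₁ + b₂ * c₂).im : ℂ)) / 2) :
    ∀ z : ℂ, (H - z • (1 : Matrix (Fin 3) (Fin 3) ℂ)).det
      = -((z - (a : ℂ) * (Real.cos θ : ℂ))
          * (z^2 - p - q * (Real.cos (2*θ) : ℂ) - t * (Real.sin (2*θ) : ℂ))) := by
  intro z
  have hIdiv : (1:ℂ)/(2*Complex.I) = -Complex.I/2 := by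
    have h := Complex.I_mul_I
    field_simp
    linear_combination h
  have h1 : ((((a : ℂ)^2 + b₁ * c₁ + b₂ * c₂).re : ℝ) : ℂ)
      = (((a : ℂ)^2 + b₁ * c₁ + b₂ * c₂)
          + starRingEnd ℂ ((a : ℂ)^2 + b₁ * c₁ + b₂ * c₂)) / 2 := by
    have := Complex.add_conj ((a : ℂ)^2 + b₁ * c₁ + b₂ * c₂)
    push_cast at this
    linear_combination (-(1:ℂ)/2) * this
  have h2 : (((b₁ * c₁ + b₂ * c₂).im : ℝ) : ℂ)
      = (starRingEnd ℂ (b₁ * c₁ + b₂ * c₂) - (b₁ * c₁ + b₂ * c₂)) * Complex.I / 2 := by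
    have := Complex.sub_conj (b₁ * c₁ + b₂ * c₂)
    push_cast at this
    linear_combination (Complex.I/2) * this
      + (((b₁ * c₁ + b₂ * c₂).im : ℝ) : ℂ) * Complex.I_sq
  have hs : (Complex.sin (θ:ℂ))^2 = 1 - (Complex.cos (θ:ℂ))^2 := by
    linear_combination Complex.sin_sq_add_cos_sq (θ:ℂ)
  subst hA hJ
  have htr : Matrix.trace ((!![1, 0, 0; 0, -1, 0; 0, 0, 1] : Matrix (Fin 3) (Fin 3) ℂ)
        * (!![(a : ℂ), b₁, 0; c₁, -(a : ℂ), b₂; 0, c₂, (a : ℂ)])ᴴ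
        * !![1, 0, 0; 0, -1, 0; 0, 0, 1]
        * !![(a : ℂ), b₁, 0; c₁, -(a : ℂ), b₂; 0, c₂, (a : ℂ)])
      = 3*(a:ℂ)^2 - (starRingEnd ℂ b₁ * b₁ + starRingEnd ℂ c₁ * c₁
          + starRingEnd ℂ b₂ * b₂ + starRingEnd ℂ c₂ * c₂) := by
    simp [Matrix.trace_fin_three, Matrix.mul_apply, Fin.sum_univ_succ,
      Matrix.conjTranspose_apply, Complex.conj_ofReal, Matrix.vecMul, Matrix.vecHead,
      Matrix.vecTail, dotProduct]
    ring
  rw [hIdiv] at hH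
  have hH2 : H = !![(a:ℂ) * Complex.cos (θ:ℂ),
        (b₁ - starRingEnd ℂ c₁)/2 * Complex.cos (θ:ℂ)
          - Complex.I * (b₁ + starRingEnd ℂ c₁)/2 * Complex.sin (θ:ℂ), 0;
      (c₁ - starRingEnd ℂ b₁)/2 * Complex.cos (θ:ℂ)
          - Complex.I * (c₁ + starRingEnd ℂ b₁)/2 * Complex.sin (θ:ℂ),
        -((a:ℂ) * Complex.cos (θ:ℂ)),
        (b₂ - starRingEnd ℂ c₂)/2 * Complex.cos (θ:ℂ)
          - Complex.I * (b₂ + starRingEnd ℂ c₂)/2 * Complex.sin (θ:ℂ);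
      0, (c₂ - starRingEnd ℂ b₂)/2 * Complex.cos (θ:ℂ)
          - Complex.I * (c₂ + starRingEnd ℂ b₂)/2 * Complex.sin (θ:ℂ),
        (a:ℂ) * Complex.cos (θ:ℂ)] := by
    subst hH
    ext i j
    fin_cases i <;> fin_cases j <;>
      simp [Matrix.mul_apply, Fin.sum_univ_succ, Matrix.conjTranspose_apply,
        Complex.conj_ofReal, Matrix.vecMul, Matrix.vecHead, Matrix.vecTail,
        dotProduct, Complex.ofReal_cos, Complex.ofReal_sin] <;> ring
  rw [hH2, hp, hq, ht, htr, h1, h2, Real.cos_two_mul, Real.sin_two_mul]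
  simp only [Matrix.det_fin_three, Matrix.sub_apply, Matrix.smul_apply,
    Matrix.one_apply, Matrix.cons_val', Matrix.cons_val_zero, Matrix.cons_val_one,
    Matrix.head_cons, Matrix.empty_val', Matrix.cons_val_fin_one, Matrix.head_fin_const,
    smul_eq_mul, Fin.isValue]
  norm_num
  push_cast
  linear_combination
    (-(z - (a:ℂ) * Complex.cos (θ:ℂ)) *
      ((b₁ + starRingEnd ℂ c₁) * (c₁ + starRingEnd ℂ b₁)
        + (b₂ + starRingEnd ℂ c₂) * (c₂ + starRingEnd ℂ b₂)) / 4) * hs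
    + ((z - (a:ℂ) * Complex.cos (θ:ℂ)) * (Complex.sin (θ:ℂ))^2 *
      ((b₁ + starRingEnd ℂ c₁) * (c₁ + starRingEnd ℂ b₁)
        + (b₂ + starRingEnd ℂ c₂) * (c₂ + starRingEnd ℂ b₂)) / 4) * Complex.I_sq
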